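/- The global sensitivity of the TDT statistic χ²(b,c) = (b−c)²/(b+c) (with χ²(0,0)=0), under neighboring datasets differing in one family of N families (so b+c ≤ 2N and one family can change (b,c) by at most (±2, ∓2) or shift b+c by up to 2), equals 8(N−1)/N. -/

import Mathlib

open scoped BigOperators

/-- A TDT dataset over `N` families: each family contributes a pair of counts
`(bᵢ, cᵢ)` to the off-diagonal cells, with `bᵢ + cᵢ ≤ 2` (one unit per parent). -/
def validTDT {N : ℕ} (x : Fin N → ℕ × ℕ) : Prop :=
  ∀ i, (x i).1 + (x i).2 ≤ 2

/-- The Hamming distance between TDT tables `T(b,c)` and `T(b',c')` over `N`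
families: the minimum, over datasets realizing the two tables, of the number of
families in which they differ. -/
noncomputable def tdtDist (N b c b' c' : ℕ) : ℕ :=
  sInf {k : ℕ | ∃ x y : Fin N → ℕ × ℕ, validTDT x ∧ validTDT y ∧
    (∑ i, (x i).1) = b ∧ (∑ i, (x i).2) = c ∧
    (∑ i, (y i).1) = b' ∧ (∑ i, (y i).2) = c' ∧ hammingDist x y = k}

/-- The TDT statistic `χ²(b,c) = (b−c)²/(b+c)`, with `χ²(0,0) = 0`. -/
noncomputable def chiTDT (b c : ℕ) : ℝ :=
  if b + c = 0 then 0 else ((b : ℝ) - (c : ℝ)) ^ 2 / ((b : ℝ) + (c : ℝ))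

lemma tdt_aux1 (N s d e : ℝ) (hN : 2 ≤ N) (h4 : 4 ≤ d) (hds : d ≤ s)
    (hs : s ≤ 2*N) (hse : s + e ≤ 2*N) (he0 : 0 ≤ e) (he2 : e ≤ 2) :
    d^2/s - (d-4+e)^2/(s+e) ≤ 8*(N-1)/N := by
  have hN0 : (0:ℝ) < N := by linarith
  have h0 : (0:ℝ) < s := by linarith
  have h0' : (0:ℝ) < s + e := by linarith
  rw [div_sub_div _ _ (ne_of_gt h0) (ne_of_gt h0'), div_le_div_iff₀ (by positivity) hN0]
  nlinarith [mul_nonneg (mul_nonneg (sub_nonneg.2 hs) (sub_nonneg.2 hds)) he0,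
    mul_nonneg (sub_nonneg.2 hs) (sub_nonneg.2 hds), sq_nonneg (s - d),
    mul_nonneg (sub_nonneg.2 hse) he0, mul_nonneg he0 (sub_nonneg.2 he2),
    mul_nonneg (mul_nonneg h0.le (sub_nonneg.2 hds)) he0,
    mul_nonneg (mul_nonneg h0.le h0.le) he0,
    mul_nonneg (mul_nonneg (sub_nonneg.2 hs) (sub_nonneg.2 hs)) he0,
    mul_nonneg (sub_nonneg.2 hds) he0, sq_nonneg e,
    mul_nonneg (mul_nonneg (sub_nonneg.2 hds) (sub_nonneg.2 hds)) he0]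

lemma tdt_aux2 (N s d e : ℝ) (hN : 2 ≤ N) (h4 : 4 ≤ d) (hds : d ≤ s)
    (hs : s ≤ 2*N) (hs1 : 1 ≤ s + e) (he0 : e ≤ 0) :
    d^2/s - (d-4-e)^2/(s+e) ≤ 8*(N-1)/N := by
  have hN0 : (0:ℝ) < N := by linarith
  have h0 : (0:ℝ) < s := by linarith
  have h0' : (0:ℝ) < s + e := by linarith
  have step1 : (d-4)^2/s ≤ (d-4-e)^2/(s+e) := by
    rw [div_le_div_iff₀ h0 h0']
    nlinarith [mul_nonneg (sub_nonneg.2 (by linarith : (4:ℝ) ≤ d)) (neg_nonneg.2 he0),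
      mul_nonneg (mul_nonneg (sub_nonneg.2 (by linarith : (4:ℝ) ≤ d)) (neg_nonneg.2 he0)) h0.le,
      mul_nonneg (mul_nonneg (neg_nonneg.2 he0) (neg_nonneg.2 he0)) h0.le,
      sq_nonneg (d-4)]
  have step2 : d^2/s - (d-4)^2/s ≤ 8*(N-1)/N := by
    rw [div_sub_div_same, div_le_div_iff₀ h0 hN0]
    nlinarith [mul_nonneg (sub_nonneg.2 hds) hN0.le]
  linarith

lemma tdt_key' (N b c b' c' : ℝ) (hN : 2 ≤ N) (hc : 0 ≤ c) (hc' : 0 ≤ c') (hcb : c ≤ b)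
    (h1 : b - b' ≤ 2) (h4 : c' - c ≤ 2)
    (hs : b + c ≤ 2*N) (hs' : b' + c' ≤ 2*N)
    (h6 : (b'+c') - (b+c) ≤ 2)
    (hp : 1 ≤ b + c) (hp' : 1 ≤ b' + c') :
    (b-c)^2/(b+c) - (b'-c')^2/(b'+c') ≤ 8*(N-1)/N := by
  have hN0 : (0:ℝ) < N := by linarith
  have h0 : (0:ℝ) < b + c := by linarith
  have h0' : (0:ℝ) < b' + c' := by linarith
  rcases le_total (b - c) 4 with hd | hd
  · have e1 : (b-c)^2/(b+c) ≤ 4 := by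
      rw [div_le_iff₀ h0]
      nlinarith [mul_nonneg (sub_nonneg.2 hcb) (sub_nonneg.2 hd)]
    have e2 : (0:ℝ) ≤ (b'-c')^2/(b'+c') := by positivity
    have e3 : (4:ℝ) ≤ 8*(N-1)/N := by
      rw [le_div_iff₀ hN0]; nlinarith
    linarith
  · set e : ℝ := (b'+c') - (b+c) with he
    have hse : b + c + e = b' + c' := by simp [he]
    rcases le_total 0 e with hee | hee
    · have key1 : (b-c) - 4 + e ≤ b' - c' := by simp only [he]; linarith
      have hA : 0 ≤ (b-c) - 4 + e := by linarith
      have hsq : ((b-c)-4+e)^2 ≤ (b'-c')^2 := by nlinarith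
      have mono : ((b-c)-4+e)^2/(b'+c') ≤ (b'-c')^2/(b'+c') :=
        (div_le_div_iff_of_pos_right h0').2 hsq
      have := tdt_aux1 N (b+c) (b-c) e hN hd (by linarith) hs (by rw [hse]; exact hs')
        hee (by linarith)
      rw [hse] at this
      linarith
    · have key1 : (b-c) - 4 - e ≤ b' - c' := by simp only [he]; linarith
      have hA : 0 ≤ (b-c) - 4 - e := by linarith
      have hsq : ((b-c)-4-e)^2 ≤ (b'-c')^2 := by nlinarith
      have mono : ((b-c)-4-e)^2/(b'+c') ≤ (b'-c')^2/(b'+c') :=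
        (div_le_div_iff_of_pos_right h0').2 hsq
      have := tdt_aux2 N (b+c) (b-c) e hN hd (by linarith) hs (by rw [hse]; exact hp') hee
      rw [hse] at this
      linarith

lemma tdt_key (N b c b' c' : ℝ) (hN : 2 ≤ N) (hb : 0 ≤ b) (hc : 0 ≤ c)
    (hb' : 0 ≤ b') (hc' : 0 ≤ c')
    (h1 : b - b' ≤ 2) (h2 : b' - b ≤ 2) (h3 : c - c' ≤ 2) (h4 : c' - c ≤ 2)
    (hs : b + c ≤ 2*N) (hs' : b' + c' ≤ 2*N)
    (h6 : (b'+c') - (b+c) ≤ 2)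
    (hp : 1 ≤ b + c) (hp' : 1 ≤ b' + c') :
    (b-c)^2/(b+c) - (b'-c')^2/(b'+c') ≤ 8*(N-1)/N := by
  rcases le_total c b with hcb | hcb
  · exact tdt_key' N b c b' c' hN hc hc' hcb h1 h4 hs hs' h6 hp hp'
  · have := tdt_key' N c b c' b' hN hb hb' hcb h3 h2 (by linarith) (by linarith)
      (by linarith) (by linarith) (by linarith)
    have e1 : (c-b)^2 = (b-c)^2 := by ring
    have e2 : (c'-b')^2 = (b'-c')^2 := by ring
    rw [e1, e2, add_comm c b, add_comm c' b'] at this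
    exact this

lemma tdt_keyAbs (N b c b' c' : ℝ) (hN : 2 ≤ N) (hb : 0 ≤ b) (hc : 0 ≤ c)
    (hb' : 0 ≤ b') (hc' : 0 ≤ c')
    (h1 : b - b' ≤ 2) (h2 : b' - b ≤ 2) (h3 : c - c' ≤ 2) (h4 : c' - c ≤ 2)
    (hs : b + c ≤ 2*N) (hs' : b' + c' ≤ 2*N)
    (h5 : (b+c) - (b'+c') ≤ 2) (h6 : (b'+c') - (b+c) ≤ 2)
    (hp : 1 ≤ b + c) (hp' : 1 ≤ b' + c') :
    |(b-c)^2/(b+c) - (b'-c')^2/(b'+c')| ≤ 8*(N-1)/N := by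
  rw [abs_sub_le_iff]
  exact ⟨tdt_key N b c b' c' hN hb hc hb' hc' h1 h2 h3 h4 hs hs' h6 hp hp',
    tdt_key N b' c' b c hN hb' hc' hb hc h2 h1 h4 h3 hs' hs h5 hp' hp⟩

lemma tdt_smallCase (N X Y : ℝ) (hN : 2 ≤ N) (hX : 0 ≤ X) (hY : 0 ≤ Y)
    (h1 : 1 ≤ X + Y) (h2 : X + Y ≤ 2) : (X-Y)^2/(X+Y) ≤ 8*(N-1)/N := by
  have hN0 : (0:ℝ) < N := by linarith
  have hB : (4:ℝ) ≤ 8*(N-1)/N := by rw [le_div_iff₀ hN0]; nlinarith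
  have hq : (X-Y)^2/(X+Y) ≤ X + Y := by
    rw [div_le_iff₀ (by linarith)]
    nlinarith [mul_nonneg hX hY]
  linarith

lemma tdt_natBound (N : ℕ) (hN : 2 ≤ N) (a d a' d' t u : ℕ)
    (hv : a + d ≤ 2) (hv' : a' + d' ≤ 2)
    (hs : (a+t) + (d+u) ≤ 2*N) (hs' : (a'+t) + (d'+u) ≤ 2*N) :
    |chiTDT (a+t) (d+u) - chiTDT (a'+t) (d'+u)| ≤ 8*((N:ℝ)-1)/N := by
  have hN2 : (2:ℝ) ≤ (N:ℝ) := by exact_mod_cast hN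
  have hN0 : (0:ℝ) < N := by linarith
  have ha2 : (a:ℝ) ≤ 2 := by exact_mod_cast (show a ≤ 2 by omega)
  have ha2' : (a':ℝ) ≤ 2 := by exact_mod_cast (show a' ≤ 2 by omega)
  have hd2 : (d:ℝ) ≤ 2 := by exact_mod_cast (show d ≤ 2 by omega)
  have hd2' : (d':ℝ) ≤ 2 := by exact_mod_cast (show d' ≤ 2 by omega)
  have hvv : (a:ℝ) + d ≤ 2 := by exact_mod_cast hv
  have hvv' : (a':ℝ) + d' ≤ 2 := by exact_mod_cast hv'
  have hss : (a:ℝ) + t + (d + u) ≤ 2*N := by exact_mod_cast hs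
  have hss' : (a':ℝ) + t + (d' + u) ≤ 2*N := by exact_mod_cast hs'
  have ca : (0:ℝ) ≤ a := Nat.cast_nonneg _
  have ca' : (0:ℝ) ≤ a' := Nat.cast_nonneg _
  have cd : (0:ℝ) ≤ d := Nat.cast_nonneg _
  have cd' : (0:ℝ) ≤ d' := Nat.cast_nonneg _
  have ct : (0:ℝ) ≤ t := Nat.cast_nonneg _
  have cu : (0:ℝ) ≤ u := Nat.cast_nonneg _
  unfold chiTDT
  by_cases hz : (a+t) + (d+u) = 0 <;> by_cases hz' : (a'+t) + (d'+u) = 0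
  · rw [if_pos hz, if_pos hz']
    simpa using div_nonneg (by linarith : (0:ℝ) ≤ 8*((N:ℝ)-1)) (by linarith : (0:ℝ) ≤ (N:ℝ))
  · rw [if_pos hz, if_neg hz']
    have h1 : (1:ℝ) ≤ ((a'+t:ℕ):ℝ) + ((d'+u:ℕ):ℝ) := by
      exact_mod_cast (show 1 ≤ (a'+t) + (d'+u) by omega)
    have h2 : ((a'+t:ℕ):ℝ) + ((d'+u:ℕ):ℝ) ≤ 2 := by
      exact_mod_cast (show (a'+t) + (d'+u) ≤ 2 by omega)
    rw [zero_sub, abs_neg, abs_of_nonneg (by positivity)]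
    exact tdt_smallCase (N:ℝ) _ _ hN2 (Nat.cast_nonneg _) (Nat.cast_nonneg _) h1 h2
  · rw [if_neg hz, if_pos hz']
    have h1 : (1:ℝ) ≤ ((a+t:ℕ):ℝ) + ((d+u:ℕ):ℝ) := by
      exact_mod_cast (show 1 ≤ (a+t) + (d+u) by omega)
    have h2 : ((a+t:ℕ):ℝ) + ((d+u:ℕ):ℝ) ≤ 2 := by
      exact_mod_cast (show (a+t) + (d+u) ≤ 2 by omega)
    rw [sub_zero, abs_of_nonneg (by positivity)]
    exact tdt_smallCase (N:ℝ) _ _ hN2 (Nat.cast_nonneg _) (Nat.cast_nonneg _) h1 h2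
  · rw [if_neg hz, if_neg hz']
    have hp : (1:ℝ) ≤ ((a:ℝ)+t) + ((d:ℝ)+u) := by
      have : 1 ≤ (a+t)+(d+u) := by omega
      exact_mod_cast this
    have hp' : (1:ℝ) ≤ ((a':ℝ)+t) + ((d':ℝ)+u) := by
      have : 1 ≤ (a'+t)+(d'+u) := by omega
      exact_mod_cast this
    push_cast
    exact tdt_keyAbs (N:ℝ) ((a:ℝ)+t) ((d:ℝ)+u) ((a':ℝ)+t) ((d':ℝ)+u) hN2
      (by positivity) (by positivity) (by positivity) (by positivity)
      (by linarith) (by linarith) (by linarith) (by linarith)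
      (by linarith) (by linarith) (by linarith) (by linarith) hp hp'

lemma tdt_extract (N b c b' c' : ℕ) (h : tdtDist N b c b' c' = 1) :
    ∃ a d a' d' t u : ℕ, b = a + t ∧ c = d + u ∧ b' = a' + t ∧ c' = d' + u ∧
      a + d ≤ 2 ∧ a' + d' ≤ 2 := by
  unfold tdtDist at h
  set S := {k : ℕ | ∃ x y : Fin N → ℕ × ℕ, validTDT x ∧ validTDT y ∧
    (∑ i, (x i).1) = b ∧ (∑ i, (x i).2) = c ∧
    (∑ i, (y i).1) = b' ∧ (∑ i, (y i).2) = c' ∧ hammingDist x y = k} with hS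
  have hne : S.Nonempty := by
    by_contra hc
    rw [Set.not_nonempty_iff_eq_empty] at hc
    rw [hc, Nat.sInf_empty] at h
    exact absurd h (by norm_num)
  have hm := Nat.sInf_mem hne
  rw [h] at hm
  obtain ⟨x, y, hx, hy, hbx, hcx, hby, hcy, hxy⟩ := hm
  unfold hammingDist at hxy
  obtain ⟨i0, hi0⟩ := Finset.card_eq_one.mp hxy
  have heq : ∀ j ∈ Finset.univ.erase i0, x j = y j := by
    intro j hj
    by_contra hne2
    have hmem : j ∈ ({i0} : Finset (Fin N)) := by
      rw [← hi0]
      exact Finset.mem_filter.mpr ⟨Finset.mem_univ _, hne2⟩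
    exact (Finset.mem_erase.mp hj).1 (Finset.mem_singleton.mp hmem)
  refine ⟨(x i0).1, (x i0).2, (y i0).1, (y i0).2,
    ∑ j ∈ Finset.univ.erase i0, (x j).1, ∑ j ∈ Finset.univ.erase i0, (x j).2,
    ?_, ?_, ?_, ?_, hx i0, hy i0⟩
  · rw [← hbx, ← Finset.add_sum_erase _ _ (Finset.mem_univ i0)]
  · rw [← hcx, ← Finset.add_sum_erase _ _ (Finset.mem_univ i0)]
  · rw [← hby, ← Finset.add_sum_erase _ (fun j => (y j).1) (Finset.mem_univ i0)]
    congr 1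
    exact Finset.sum_congr rfl fun j hj => by rw [heq j hj]
  · rw [← hcy, ← Finset.add_sum_erase _ (fun j => (y j).2) (Finset.mem_univ i0)]
    congr 1
    exact Finset.sum_congr rfl fun j hj => by rw [heq j hj]

lemma tdt_witnessDist (N : ℕ) (hN : 2 ≤ N) : tdtDist N (2*N) 0 (2*N-2) 2 = 1 := by
  have hN0 : 0 < N := by omega
  set i0 : Fin N := ⟨0, hN0⟩ with hi0
  set x : Fin N → ℕ × ℕ := fun _ => (2, 0) with hxdef
  set y : Fin N → ℕ × ℕ := fun i => if i = i0 then (0, 2) else (2, 0) with hydef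
  have hsum1 : (∑ i, (x i).1) = 2*N := by
    simp [hxdef, Finset.sum_const, Finset.card_univ, mul_comm]
  have hsum2 : (∑ i, (x i).2) = 0 := by simp [hxdef]
  have hsum3 : (∑ i, (y i).1) = 2*N-2 := by
    rw [← Finset.add_sum_erase _ (fun i => (y i).1) (Finset.mem_univ i0)]
    have e1 : (y i0).1 = 0 := by simp [hydef]
    have e2 : ∑ j ∈ Finset.univ.erase i0, (y j).1 = ∑ j ∈ Finset.univ.erase i0, 2 := by
      refine Finset.sum_congr rfl fun j hj => ?_
      simp [hydef, (Finset.mem_erase.mp hj).1]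
    rw [e1, e2, Finset.sum_const, Finset.card_erase_of_mem (Finset.mem_univ i0),
      Finset.card_univ, Fintype.card_fin]
    simp; omega
  have hsum4 : (∑ i, (y i).2) = 2 := by
    rw [← Finset.add_sum_erase _ (fun i => (y i).2) (Finset.mem_univ i0)]
    have e1 : (y i0).2 = 2 := by simp [hydef]
    have e2 : ∑ j ∈ Finset.univ.erase i0, (y j).2 = 0 := by
      refine Finset.sum_eq_zero fun j hj => ?_
      simp [hydef, (Finset.mem_erase.mp hj).1]
    rw [e1, e2]
  have hham : hammingDist x y = 1 := by
    unfold hammingDist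
    have : ({i | x i ≠ y i} : Finset (Fin N)) = {i0} := by
      ext j
      by_cases hj : j = i0 <;> simp [hxdef, hydef, hj]
    rw [this, Finset.card_singleton]
  have hmem : 1 ∈ {k : ℕ | ∃ x y : Fin N → ℕ × ℕ, validTDT x ∧ validTDT y ∧
      (∑ i, (x i).1) = 2*N ∧ (∑ i, (x i).2) = 0 ∧
      (∑ i, (y i).1) = 2*N-2 ∧ (∑ i, (y i).2) = 2 ∧ hammingDist x y = k} := by
    refine ⟨x, y, ?_, ?_, hsum1, hsum2, hsum3, hsum4, hham⟩
    · intro i; simp [hxdef]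
    · intro i; by_cases hj : i = i0 <;> simp [hydef, hj]
  unfold tdtDist
  refine le_antisymm (Nat.sInf_le hmem) ?_
  rw [Nat.one_le_iff_ne_zero]
  intro h0
  have := Nat.sInf_mem ⟨1, hmem⟩
  rw [h0] at this
  obtain ⟨x', y', _, _, hb1, _, hb2, _, hham0⟩ := this
  have hxy' : x' = y' := hammingDist_eq_zero.mp hham0
  subst hxy'
  have h22 : (2*N : ℕ) = 2*N - 2 := hb1.symm.trans hb2
  exact absurd h22 (by clear * - hN; omega)

lemma tdt_witnessVal (N : ℕ) (hN : 2 ≤ N) :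
    |chiTDT (2*N) 0 - chiTDT (2*N-2) 2| = 8*((N:ℝ)-1)/N := by
  have hN2 : (2:ℝ) ≤ (N:ℝ) := by exact_mod_cast hN
  have h1 : ¬(2*N + 0 = 0) := by omega
  have h2 : ¬((2*N-2) + 2 = 0) := by omega
  unfold chiTDT
  rw [if_neg h1, if_neg h2]
  have hc : ((2*N-2 : ℕ):ℝ) = 2*(N:ℝ) - 2 := by
    have h22 : (2:ℕ) ≤ 2*N := by omega
    rw [Nat.cast_sub h22]
    push_cast
    ring
  rw [hc]
  push_cast
  have hpos : (0:ℝ) < N := by linarith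
  rw [abs_of_nonneg (by
    rw [sub_nonneg, div_le_div_iff₀ (by linarith) (by linarith)]
    nlinarith)]
  field_simp
  ring_nf
  field_simp
  ring

theorem stmt15 (N : ℕ) (hN : 2 ≤ N) :
    (⨆ p : {p : (ℕ × ℕ) × (ℕ × ℕ) //
        p.1.1 + p.1.2 ≤ 2 * N ∧ p.2.1 + p.2.2 ≤ 2 * N ∧
        tdtDist N p.1.1 p.1.2 p.2.1 p.2.2 = 1},
      |chiTDT (p : (ℕ × ℕ) × (ℕ × ℕ)).1.1 (p : (ℕ × ℕ) × (ℕ × ℕ)).1.2 -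
        chiTDT (p : (ℕ × ℕ) × (ℕ × ℕ)).2.1 (p : (ℕ × ℕ) × (ℕ × ℕ)).2.2|) =
      8 * ((N : ℝ) - 1) / (N : ℝ) := by
  have hbound : ∀ p : {p : (ℕ × ℕ) × (ℕ × ℕ) //
      p.1.1 + p.1.2 ≤ 2 * N ∧ p.2.1 + p.2.2 ≤ 2 * N ∧
      tdtDist N p.1.1 p.1.2 p.2.1 p.2.2 = 1},
      |chiTDT (p : (ℕ × ℕ) × (ℕ × ℕ)).1.1 (p : (ℕ × ℕ) × (ℕ × ℕ)).1.2 -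
        chiTDT (p : (ℕ × ℕ) × (ℕ × ℕ)).2.1 (p : (ℕ × ℕ) × (ℕ × ℕ)).2.2| ≤
      8 * ((N : ℝ) - 1) / (N : ℝ) := by
    rintro ⟨⟨⟨b, c⟩, ⟨b', c'⟩⟩, hbc, hbc', hdist⟩
    obtain ⟨a, d, a', d', t, u, rfl, rfl, rfl, rfl, hv, hv'⟩ :=
      tdt_extract N b c b' c' hdist
    exact tdt_natBound N hN a d a' d' t u hv hv' hbc hbc'
  have hw1 : 2*N + 0 ≤ 2*N := by omega
  have hw2 : (2*N-2) + 2 ≤ 2*N := by omega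
  set p₀ : {p : (ℕ × ℕ) × (ℕ × ℕ) //
      p.1.1 + p.1.2 ≤ 2 * N ∧ p.2.1 + p.2.2 ≤ 2 * N ∧
      tdtDist N p.1.1 p.1.2 p.2.1 p.2.2 = 1} :=
    ⟨((2*N, 0), (2*N-2, 2)), hw1, hw2, tdt_witnessDist N hN⟩ with hp₀
  haveI : Nonempty {p : (ℕ × ℕ) × (ℕ × ℕ) //
      p.1.1 + p.1.2 ≤ 2 * N ∧ p.2.1 + p.2.2 ≤ 2 * N ∧
      tdtDist N p.1.1 p.1.2 p.2.1 p.2.2 = 1} := ⟨p₀⟩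
  refine le_antisymm (ciSup_le hbound) ?_
  have hbdd : BddAbove (Set.range fun p : {p : (ℕ × ℕ) × (ℕ × ℕ) //
      p.1.1 + p.1.2 ≤ 2 * N ∧ p.2.1 + p.2.2 ≤ 2 * N ∧
      tdtDist N p.1.1 p.1.2 p.2.1 p.2.2 = 1} =>
      |chiTDT (p : (ℕ × ℕ) × (ℕ × ℕ)).1.1 (p : (ℕ × ℕ) × (ℕ × ℕ)).1.2 -
        chiTDT (p : (ℕ × ℕ) × (ℕ × ℕ)).2.1 (p : (ℕ × ℕ) × (ℕ × ℕ)).2.2|) :=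
    ⟨8 * ((N : ℝ) - 1) / (N : ℝ), by rintro v ⟨p, rfl⟩; exact hbound p⟩
  have hle := le_ciSup hbdd p₀
  calc 8 * ((N : ℝ) - 1) / (N : ℝ)
      = |chiTDT (2*N) 0 - chiTDT (2*N-2) 2| := (tdt_witnessVal N hN).symm
    _ ≤ _ := hle
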